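/- For every n ≥ 1, there exists a word over the alphabet {1,…,n} of length 2ⁿ − 1 that contains no bad j-pair for any 1 ≤ j ≤ n (e.g., the word defined inductively by w₁ = 1 and w_{n+1} = wₙ · (n+1) · wₙ). -/

import Mathlib

/-- `u` has a bad `j`-pair: two positions `k < k'` carrying letter `j` such that
all letters strictly between them are `≤ j`. (Positions are 0-indexed.) -/
def HasBadPair (u : List ℕ) (j : ℕ) : Prop :=
  ∃ k k' : ℕ, k < k' ∧ k' < u.length ∧
    u.getD k 0 = j ∧ u.getD k' 0 = j ∧
    ∀ l : ℕ, k < l → l < k' → u.getD l 0 ≤ j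

/-- The Zimin-type word: `w 0 = []`, `w (n+1) = w n ++ (n+1) :: w n`. -/
def zw : ℕ → List ℕ
  | 0 => []
  | n + 1 => zw n ++ (n + 1) :: zw n

lemma zw_len (n : ℕ) : (zw n).length = 2 ^ n - 1 := by
  induction n with
  | zero => simp [zw]
  | succ n ih =>
      have h1 : 1 ≤ 2 ^ n := Nat.one_le_two_pow
      simp [zw, ih, pow_succ]
      omega

lemma zw_mem (n : ℕ) : ∀ x ∈ zw n, 1 ≤ x ∧ x ≤ n := by
  induction n with
  | zero => simp [zw]
  | succ n ih =>
      intro x hx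
      simp [zw] at hx
      rcases hx with hx | hx | hx
      · exact ⟨(ih x hx).1, le_trans (ih x hx).2 (Nat.le_succ n)⟩
      · omega
      · exact ⟨(ih x hx).1, le_trans (ih x hx).2 (Nat.le_succ n)⟩

lemma zw_getD_mem {n k : ℕ} (hk : k < (zw n).length) : (zw n).getD k 0 ∈ zw n := by
  rw [List.getD_eq_getElem _ _ hk]
  exact List.getElem_mem _

lemma zw_no_bad (n : ℕ) : ∀ j, 1 ≤ j → j ≤ n → ¬ HasBadPair (zw n) j := by
  induction n with
  | zero => intro j h1 h2; omega
  | succ n ih =>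
      intro j hj1 hj2 ⟨k, k', hkk, hk', hvk, hvk', hbet⟩
      set L := (zw n).length with hL
      have hlen : (zw (n + 1)).length = 2 * L + 1 := by
        simp [zw, hL]; omega
      -- getD facts
      have hgetL : ∀ m, m < L → (zw (n + 1)).getD m 0 = (zw n).getD m 0 := by
        intro m hm
        simpa [zw] using List.getD_append (zw n) ((n+1) :: zw n) 0 m hm
      have hgetM : (zw (n + 1)).getD L 0 = n + 1 := by
        have := List.getD_append_right (zw n) ((n+1) :: zw n) 0 L (le_refl L)
        simpa [zw, hL] using this
      have hgetR : ∀ m, L < m → (zw (n + 1)).getD m 0 = (zw n).getD (m - (L + 1)) 0 := by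
        intro m hm
        have h1 : L ≤ m := le_of_lt hm
        have := List.getD_append_right (zw n) ((n+1) :: zw n) 0 m h1
        have h2 : m - L = (m - (L + 1)) + 1 := by omega
        rw [h2] at this
        simpa [zw] using this
      have hval : ∀ m, m < 2 * L + 1 → m ≠ L → (zw (n+1)).getD m 0 ≤ n := by
        intro m hm hne
        rcases lt_or_gt_of_ne hne with h | h
        · rw [hgetL m h]
          exact (zw_mem n _ (zw_getD_mem (by omega))).2
        · rw [hgetR m h]
          exact (zw_mem n _ (zw_getD_mem (by omega))).2
      rw [hlen] at hk'
      by_cases hjn : j = n + 1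
      · -- only one occurrence of n+1
        have hkL : k = L := by
          by_contra hne
          have := hval k (by omega) hne
          omega
        have hk'L : k' = L := by
          by_contra hne
          have := hval k' hk' hne
          omega
        omega
      · have hjn' : j ≤ n := by omega
        rcases lt_trichotomy k' L with h1 | h1 | h1
        · -- both in left copy
          apply ih j hj1 hjn'
          refine ⟨k, k', hkk, h1, ?_, ?_, ?_⟩
          · rw [← hgetL k (by omega)]; exact hvk
          · rw [← hgetL k' h1]; exact hvk'
          · intro l hl1 hl2
            rw [← hgetL l (by omega)]
            exact hbet l hl1 hl2
        · -- k' = L impossible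
          rw [h1, hgetM] at hvk'; omega
        · rcases lt_trichotomy k L with h2 | h2 | h2
          · -- straddles the middle: letter n+1 at L is ≤ j, contradiction
            have := hbet L h2 h1
            rw [hgetM] at this; omega
          · rw [h2, hgetM] at hvk; omega
          · -- both in right copy
            apply ih j hj1 hjn'
            refine ⟨k - (L + 1), k' - (L + 1), by omega, by omega, ?_, ?_, ?_⟩
            · rw [← hgetR k h2]; exact hvk
            · rw [← hgetR k' h1]; exact hvk'
            · intro l hl1 hl2
              have := hbet (l + (L + 1)) (by omega) (by omega)
              rw [hgetR (l + (L + 1)) (by omega)] at this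
              simpa using this

theorem exists_long_word_without_bad_pair (n : ℕ) (hn : 1 ≤ n) :
    ∃ u : List ℕ, (∀ x ∈ u, 1 ≤ x ∧ x ≤ n) ∧ u.length = 2 ^ n - 1 ∧
      ∀ j : ℕ, 1 ≤ j → j ≤ n → ¬ HasBadPair u j := by
  exact ⟨zw n, zw_mem n, zw_len n, zw_no_bad n⟩
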